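/- Let n ≥ 1, let m be an integer with m ≥ n + 1, and let a be a residue modulo m. If x and y are distinct binary words of length n with σ(x) ≡ a (mod m) and σ(y) ≡ a (mod m), then no binary word of length n − 1 is a common subsequence of both x and y; that is, the Varshamov–Tenengolts code {x ∈ {0,1}^n : σ(x) ≡ a (mod m)} corrects a single deletion. -/

import Mathlib

/-- The moment of a binary word `x = x_1 … x_n`: `σ(x) = ∑ i, i * x_i` (1-based indexing). -/
def mom {n : ℕ} (x : Fin n → Bool) : ℕ :=
  ∑ i : Fin n, ((i : ℕ) + 1) * (if x i then 1 else 0)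

/-- Bit value. -/
def bv (b : Bool) : ℕ := if b then 1 else 0

lemma bv_true : bv true = 1 := rfl
lemma bv_false : bv false = 0 := rfl

lemma bv_le_one (b : Bool) : bv b ≤ 1 := by cases b <;> simp [bv]

/-- Number of ones in a list. -/
def ones (l : List Bool) : ℕ := (l.map bv).sum

lemma ones_nil : ones [] = 0 := rfl

lemma ones_cons (b t) : ones (b :: t) = bv b + ones t := rfl

lemma ones_append (s t : List Bool) : ones (s ++ t) = ones s + ones t := by
  simp [ones]

lemma ones_le_length (l : List Bool) : ones l ≤ l.length := by
  induction l with
  | nil => simp [ones]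
  | cons b t ih =>
      have := bv_le_one b
      simp only [ones_cons, List.length_cons]; omega

lemma ones_eq_zero {l : List Bool} (h : ones l = 0) : l = List.replicate l.length false := by
  induction l with
  | nil => rfl
  | cons b t ih =>
      rw [ones_cons] at h
      cases b with
      | true => rw [bv_true] at h; omega
      | false =>
          rw [bv_false] at h
          simp only [List.length_cons, List.replicate_succ]
          rw [← ih (by omega)]

lemma ones_eq_length {l : List Bool} (h : ones l = l.length) :
    l = List.replicate l.length true := by
  induction l with
  | nil => rfl
  | cons b t ih =>
      rw [ones_cons] at h
      simp only [List.length_cons] at h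
      have ht := ones_le_length t
      cases b with
      | false => rw [bv_false] at h; omega
      | true =>
          rw [bv_true] at h
          simp only [List.length_cons, List.replicate_succ]
          rw [← ih (by omega)]

/-- Moment with starting weight `p`. -/
def moms : ℕ → List Bool → ℕ
  | _, [] => 0
  | p, b :: t => p * bv b + moms (p+1) t

lemma moms_shift (l : List Bool) : ∀ p, moms (p+1) l = moms p l + ones l := by
  induction l with
  | nil => intro p; rfl
  | cons b t ih =>
      intro p
      show (p+1) * bv b + moms (p+2) t = p * bv b + moms (p+1) t + ones (b :: t)
      rw [ih (p+1), ones_cons]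
      ring

lemma moms_insert (b : Bool) : ∀ (w : List Bool) (k : ℕ), k ≤ w.length → ∀ p,
    moms p (w.take k ++ b :: w.drop k) = moms p w + ones (w.drop k) + (p + k) * bv b := by
  intro w
  induction w with
  | nil =>
      intro k hk p
      have hk0 : k = 0 := by simpa using hk
      subst hk0
      show p * bv b + moms (p+1) [] = moms p [] + ones [] + (p + 0) * bv b
      simp [moms, ones_nil]
  | cons a t ih =>
      intro k hk p
      cases k with
      | zero =>
          show p * bv b + moms (p+1) (a :: t) = moms p (a :: t) + ones (a :: t) + (p + 0) * bv b
          rw [moms_shift (a :: t) p]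
          ring
      | succ k' =>
          simp only [List.length_cons] at hk
          rw [List.take_succ_cons, List.drop_succ_cons, List.cons_append]
          show p * bv a + moms (p+1) (t.take k' ++ b :: t.drop k')
              = (p * bv a + moms (p+1) t) + ones (t.drop k') + (p + (k'+1)) * bv b
          rw [ih k' (by omega) (p+1)]
          ring

lemma moms_ofFn : ∀ {n : ℕ} (x : Fin n → Bool) (p : ℕ),
    moms p (List.ofFn x) = ∑ i : Fin n, (p + (i : ℕ)) * bv (x i) := by
  intro n
  induction n with
  | zero => intro x p; simp [moms]
  | succ n ih =>
      intro x p
      rw [List.ofFn_succ]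
      show p * bv (x 0) + moms (p+1) (List.ofFn fun i => x i.succ) = _
      rw [ih (fun i => x i.succ) (p+1), Fin.sum_univ_succ]
      have e1 : (p + (((0 : Fin (n+1))) : ℕ)) = p := by simp
      rw [e1]
      congr 1
      apply Finset.sum_congr rfl
      intro i _
      rw [Fin.val_succ]
      ring

lemma mom_eq_moms {n : ℕ} (x : Fin n → Bool) : mom x = moms 1 (List.ofFn x) := by
  rw [moms_ofFn, mom]
  apply Finset.sum_congr rfl
  intro i _
  cases h : x i <;> simp [bv, h, Nat.add_comm]

lemma sublist_insert {w l : List Bool} (h : w.Sublist l) :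
    l.length = w.length + 1 → ∃ k b, k ≤ w.length ∧ l = w.take k ++ b :: w.drop k := by
  induction h with
  | slnil => intro h; simp at h
  | @cons w' l' a h ih =>
      intro hl
      simp only [List.length_cons] at hl
      have : w' = l' := h.eq_of_length (by omega)
      subst this
      exact ⟨0, a, Nat.zero_le _, by simp⟩
  | @cons_cons w' l' a h ih =>
      intro hl
      simp only [List.length_cons] at hl
      obtain ⟨k, b, hk, hl'⟩ := ih (by omega)
      exact ⟨k + 1, b, by simpa using hk, by simp [hl']⟩

/-- Key combinatorial lemma: if two insertions into the same word give equal
"insertion weights", the resulting words are equal. -/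
lemma key_eq (w : List Bool) (i j : ℕ) (hij : i ≤ j) (hj : j ≤ w.length) (b c : Bool)
    (h : ones (w.drop i) + (1 + i) * bv b = ones (w.drop j) + (1 + j) * bv c) :
    w.take i ++ b :: w.drop i = w.take j ++ c :: w.drop j := by
  set t := (w.drop i).take (j - i) with ht
  have hdj : w.drop j = (w.drop i).drop (j - i) := by
    rw [List.drop_drop]; congr 1; omega
  have hsplit : w.drop i = t ++ w.drop j := by
    rw [ht, hdj, List.take_append_drop]
  have htlen : t.length = j - i := by
    rw [ht, List.length_take, List.length_drop]; omega
  have hones : ones (w.drop i) = ones t + ones (w.drop j) := by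
    rw [hsplit, ones_append]
  have h2 : ones t + (1 + i) * bv b = (1 + j) * bv c := by omega
  have htj : w.take j = w.take i ++ t := by
    rw [ht]
    have hji : j = i + (j - i) := by omega
    rw [hji, List.take_add]
    congr 2
    omega
  have htle : ones t ≤ j - i := htlen ▸ ones_le_length t
  cases b with
  | true =>
      cases c with
      | false => rw [bv_true, bv_false] at h2; omega
      | true =>
          rw [bv_true] at h2
          have hlen : ones t = t.length := by omega
          have hrep : t = List.replicate t.length true := ones_eq_length hlen
          rw [htj, hsplit, List.append_assoc]
          congr 1
          rw [hrep]
          calc (true : Bool) :: List.replicate t.length true ++ w.drop j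
              = List.replicate (t.length + 1) true ++ w.drop j := by
                rw [List.replicate_succ]
            _ = List.replicate t.length true ++ (true : Bool) :: w.drop j := by
                rw [List.replicate_succ', List.append_assoc]; rfl
  | false =>
      cases c with
      | true => rw [bv_false, bv_true] at h2; omega
      | false =>
          rw [bv_false] at h2
          have hlen : ones t = 0 := by omega
          have hrep : t = List.replicate t.length false := ones_eq_zero hlen
          rw [htj, hsplit, List.append_assoc]
          congr 1
          rw [hrep]
          calc (false : Bool) :: List.replicate t.length false ++ w.drop j
              = List.replicate (t.length + 1) false ++ w.drop j := by
                rw [List.replicate_succ]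
            _ = List.replicate t.length false ++ (false : Bool) :: w.drop j := by
                rw [List.replicate_succ', List.append_assoc]; rfl

/-- Levenshtein: for `m ≥ n + 1`, two distinct words of length `n` with
the same moment residue `a` mod `m` have no common subsequence of length `n − 1`;
the Varshamov–Tenengolts code corrects a single deletion. -/
theorem stmt13 {n : ℕ} (hn : 1 ≤ n) (m a : ℕ) (hm : n + 1 ≤ m)
    (x y : Fin n → Bool) (hxy : x ≠ y)
    (hx : mom x ≡ a [MOD m]) (hy : mom y ≡ a [MOD m]) :
    ¬ ∃ w : List Bool, w.length = n - 1 ∧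
      w.Sublist (List.ofFn x) ∧ w.Sublist (List.ofFn y) := by
  rintro ⟨w, hw, hwx, hwy⟩
  have hlx : (List.ofFn x).length = w.length + 1 := by
    rw [List.length_ofFn, hw]; omega
  have hly : (List.ofFn y).length = w.length + 1 := by
    rw [List.length_ofFn, hw]; omega
  obtain ⟨i, b, hi, hxw⟩ := sublist_insert hwx hlx
  obtain ⟨j, c, hj, hyw⟩ := sublist_insert hwy hly
  have hmx : mom x = moms 1 w + (ones (w.drop i) + (1 + i) * bv b) := by
    rw [mom_eq_moms, hxw, moms_insert b w i hi 1]; ring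
  have hmy : mom y = moms 1 w + (ones (w.drop j) + (1 + j) * bv c) := by
    rw [mom_eq_moms, hyw, moms_insert c w j hj 1]; ring
  have hcong : mom x ≡ mom y [MOD m] := hx.trans hy.symm
  rw [hmx, hmy] at hcong
  have hcong2 : ones (w.drop i) + (1 + i) * bv b ≡ ones (w.drop j) + (1 + j) * bv c [MOD m] :=
    Nat.ModEq.add_left_cancel' _ hcong
  have hbound : ∀ k : ℕ, k ≤ w.length → ∀ d : Bool,
      ones (w.drop k) + (1 + k) * bv d ≤ n := by
    intro k hk d
    have h1 : ones (w.drop k) ≤ w.length - k := by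
      have := ones_le_length (w.drop k)
      rwa [List.length_drop] at this
    have h2 : (1 + k) * bv d ≤ 1 + k := by
      calc (1 + k) * bv d ≤ (1 + k) * 1 := Nat.mul_le_mul_left _ (bv_le_one d)
        _ = 1 + k := Nat.mul_one _
    omega
  have heq : ones (w.drop i) + (1 + i) * bv b = ones (w.drop j) + (1 + j) * bv c := by
    have b1 := hbound i hi b
    have b2 := hbound j hj c
    have h3 := hcong2
    unfold Nat.ModEq at h3
    rwa [Nat.mod_eq_of_lt (by omega), Nat.mod_eq_of_lt (by omega)] at h3
  have hlists : List.ofFn x = List.ofFn y := by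
    rcases le_total i j with hij | hij
    · rw [hxw, hyw]; exact key_eq w i j hij hj b c heq
    · rw [hxw, hyw]; exact (key_eq w j i hij hi c b heq.symm).symm
  exact hxy (List.ofFn_injective hlists)
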